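/- Let T be a k-dimensional torus with Lie algebra t, integral lattice Λ, and dual lattice Λ*. Suppose T acts on ℂ^N diagonally via weights w₁,…,w_N ∈ Λ*, with moment map μ(v) = π Σ_ν |v_ν|² w_ν. Then the moment map μ : ℂ^N → t* is a proper map if and only if there exists ξ ∈ t with ⟨w_ν, ξ⟩ < 0 for all ν = 1,…,N. -/

import Mathlib

open scoped RealInnerProductSpace

/-- For the diagonal action of a `k`-torus on `ℂ^N` with weights
`w ν ∈ Λ* ⊂ t*`, the moment map `μ(v) = π ∑ ν ‖v ν‖² • w ν : ℂ^N → t*` is a proper map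
if and only if there exists `ξ ∈ t` with `⟨w ν, ξ⟩ < 0` for all `ν = 1,…,N`. -/
theorem moment_map_proper_iff_negative_pairing
    (k N : ℕ) (w : Fin N → EuclideanSpace ℝ (Fin k)) :
    IsProperMap (fun v : EuclideanSpace ℂ (Fin N) =>
        Real.pi • ∑ ν, (‖v ν‖ ^ 2) • w ν) ↔
      ∃ ξ : EuclideanSpace ℝ (Fin k), ∀ ν, ⟪w ν, ξ⟫ < 0 := by
  set μ : EuclideanSpace ℂ (Fin N) → EuclideanSpace ℝ (Fin k) :=
    fun v => Real.pi • ∑ ν, (‖v ν‖ ^ 2) • w ν with hμ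
  have hinner : ∀ (v : EuclideanSpace ℂ (Fin N)) (ξ : EuclideanSpace ℝ (Fin k)),
      ⟪μ v, ξ⟫ = Real.pi * ∑ ν, (‖v ν‖ ^ 2) * ⟪w ν, ξ⟫ := by
    intro v ξ
    rw [hμ]
    simp only [real_inner_smul_left, sum_inner, real_inner_smul_left]
  constructor
  · -- proper → ∃ ξ
    intro hp
    by_contra hne
    push_neg at hne
    -- 0 is in the convex hull of the weights
    have h0 : (0 : EuclideanSpace ℝ (Fin k)) ∈ convexHull ℝ (Set.range w) := by
      by_contra h0
      obtain ⟨f, u, hfu, hu0⟩ := geometric_hahn_banach_closed_point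
        (convex_convexHull ℝ _) ((Set.finite_range w).isClosed_convexHull ℝ) h0
      have h2 : u < 0 := by simpa using hu0
      set ξ := (InnerProductSpace.toDual ℝ (EuclideanSpace ℝ (Fin k))).symm f with hxi
      obtain ⟨ν, hν⟩ := hne ξ
      have h1 : f (w ν) < u := hfu _ (subset_convexHull ℝ _ (Set.mem_range_self ν))
      have h3 : ⟪w ν, ξ⟫ = f (w ν) := by
        rw [real_inner_comm, hxi, InnerProductSpace.toDual_symm_apply]
      linarith
    rw [convexHull_range_eq_exists_affineCombination] at h0
    obtain ⟨s, t, ht0, ht1, hcomb⟩ := h0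
    rw [Finset.affineCombination_eq_linear_combination s w t ht1] at hcomb
    -- the preimage of {0} is compact, hence bounded
    have hcpt : IsCompact (μ ⁻¹' {0}) := hp.isCompact_preimage isCompact_singleton
    obtain ⟨R, hR⟩ := hcpt.isBounded.exists_norm_le
    have h0mem : (0 : EuclideanSpace ℂ (Fin N)) ∈ μ ⁻¹' {0} := by
      simp only [Set.mem_preimage, hμ, Set.mem_singleton_iff]
      rw [Finset.sum_eq_zero, smul_zero]
      intro ν _
      simp
    have hR0 : 0 ≤ R := le_trans (norm_nonneg _) (hR _ h0mem)
    -- build an unbounded family inside the preimage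
    set r : ℝ := (R + 1) ^ 2 with hr
    have hr0 : 0 ≤ r := sq_nonneg _
    set v : EuclideanSpace ℂ (Fin N) :=
      WithLp.toLp 2 (fun ν => if ν ∈ s then ((Real.sqrt (r * t ν) : ℝ) : ℂ) else 0) with hv
    have hnv : ∀ ν, ‖v ν‖ ^ 2 = if ν ∈ s then r * t ν else 0 := by
      intro ν
      rw [hv]
      by_cases hmem : ν ∈ s
      · simp only [hmem, if_true, Complex.norm_real, Real.norm_eq_abs,
          abs_of_nonneg (Real.sqrt_nonneg _)]
        exact Real.sq_sqrt (mul_nonneg hr0 (ht0 ν hmem))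
      · simp [hmem]
    have hvmem : v ∈ μ ⁻¹' {0} := by
      have : ∑ ν, (‖v ν‖ ^ 2) • w ν = 0 := by
        calc ∑ ν, (‖v ν‖ ^ 2) • w ν
            = ∑ ν, (if ν ∈ s then (r * t ν) • w ν else 0) := by
              refine Finset.sum_congr rfl fun ν _ => ?_
              rw [hnv ν, ite_smul, zero_smul]
          _ = ∑ ν ∈ s, (r * t ν) • w ν := Finset.sum_ite_mem _ _ _ |>.trans
              (by rw [Finset.univ_inter])
          _ = r • ∑ ν ∈ s, t ν • w ν := by
              rw [Finset.smul_sum]; exact Finset.sum_congr rfl fun ν _ => (mul_smul _ _ _)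
          _ = 0 := by rw [hcomb, smul_zero]
      simp only [Set.mem_preimage, hμ, Set.mem_singleton_iff]
      rw [this, smul_zero]
    have hnorm : ‖v‖ = R + 1 := by
      rw [EuclideanSpace.norm_eq]
      have : ∑ ν, ‖v ν‖ ^ 2 = r := by
        calc ∑ ν, ‖v ν‖ ^ 2 = ∑ ν, (if ν ∈ s then r * t ν else 0) := by
              exact Finset.sum_congr rfl fun ν _ => hnv ν
          _ = ∑ ν ∈ s, r * t ν := Finset.sum_ite_mem _ _ _ |>.trans
              (by rw [Finset.univ_inter])
          _ = r * ∑ ν ∈ s, t ν := by rw [Finset.mul_sum]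
          _ = r := by rw [ht1, mul_one]
      rw [this, hr, Real.sqrt_sq (by linarith)]
    have := hR v hvmem
    rw [hnorm] at this
    linarith
  · -- ∃ ξ → proper
    rintro ⟨ξ, hξ⟩
    rw [isProperMap_iff_isCompact_preimage]
    have hcont : Continuous μ := by
      refine Continuous.const_smul (g := fun v : EuclideanSpace ℂ (Fin N) => ∑ ν, (‖v ν‖ ^ 2) • w ν) ?_ Real.pi
      refine continuous_finset_sum _ fun ν _ => ?_
      exact (((EuclideanSpace.proj ν).continuous.norm).pow 2).smul continuous_const
    refine ⟨hcont, fun K hK => ?_⟩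
    obtain ⟨R₀, hR₀⟩ := hK.isBounded.exists_norm_le
    set R : ℝ := max R₀ 0 with hRdef
    have hR : ∀ x ∈ K, ‖x‖ ≤ R := fun x hx => (hR₀ x hx).trans (le_max_left _ _)
    have hR0 : 0 ≤ R := le_max_right _ _
    -- bound each coordinate on the preimage
    set c : Fin N → ℝ := fun ν => R * ‖ξ‖ / (Real.pi * (-⟪w ν, ξ⟫)) with hc
    have hbd : ∀ u ∈ μ ⁻¹' K, ‖u‖ ≤ Real.sqrt (∑ ν, c ν) := by
      intro u hu
      have hKu : ‖μ u‖ ≤ R := hR _ hu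
      have hsum : Real.pi * ∑ ν, (‖u ν‖ ^ 2) * (-⟪w ν, ξ⟫) ≤ R * ‖ξ‖ := by
        have h1 : -⟪μ u, ξ⟫ ≤ ‖μ u‖ * ‖ξ‖ := by
          have := abs_real_inner_le_norm (μ u) ξ
          have := neg_abs_le (⟪μ u, ξ⟫)
          linarith
        have h2 : ‖μ u‖ * ‖ξ‖ ≤ R * ‖ξ‖ := mul_le_mul_of_nonneg_right hKu (norm_nonneg _)
        have h3 : -⟪μ u, ξ⟫ = Real.pi * ∑ ν, (‖u ν‖ ^ 2) * (-⟪w ν, ξ⟫) := by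
          have h4 : ∑ ν, (‖u ν‖ ^ 2) * (-⟪w ν, ξ⟫)
              = -∑ ν, (‖u ν‖ ^ 2) * ⟪w ν, ξ⟫ := by
            rw [← Finset.sum_neg_distrib]
            exact Finset.sum_congr rfl fun ν _ => by ring
          rw [hinner, h4, mul_neg]
        linarith
      have hterm : ∀ ν, ‖u ν‖ ^ 2 ≤ c ν := by
        intro ν
        have hpos : 0 < Real.pi * (-⟪w ν, ξ⟫) :=
          mul_pos Real.pi_pos (by linarith [hξ ν])
        rw [hc, le_div_iff₀ hpos]
        have hsingle : Real.pi * ((‖u ν‖ ^ 2) * (-⟪w ν, ξ⟫))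
            ≤ Real.pi * ∑ ν', (‖u ν'‖ ^ 2) * (-⟪w ν', ξ⟫) := by
          refine mul_le_mul_of_nonneg_left ?_ Real.pi_pos.le
          refine Finset.single_le_sum (f := fun ν' => (‖u ν'‖ ^ 2) * (-⟪w ν', ξ⟫))
            (fun ν' _ => ?_) (Finset.mem_univ ν)
          exact mul_nonneg (sq_nonneg _) (by linarith [hξ ν'])
        nlinarith
      rw [EuclideanSpace.norm_eq]
      refine Real.sqrt_le_sqrt ?_
      exact Finset.sum_le_sum fun ν _ => hterm ν
    have hclosed : IsClosed (μ ⁻¹' K) := hK.isClosed.preimage hcont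
    have hbdd : Bornology.IsBounded (μ ⁻¹' K) := by
      refine (Metric.isBounded_closedBall (x := (0 : EuclideanSpace ℂ (Fin N)))
        (r := Real.sqrt (∑ ν, c ν))).subset ?_
      intro u hu
      simpa [Metric.mem_closedBall, dist_zero_right] using hbd u hu
    exact Metric.isCompact_of_isClosed_isBounded hclosed hbdd
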